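/- Given f : ℝ → ℝ with f(r) ≠ 0 for every rational r ∈ [0,1], the function g_f is peripherally continuous: for every x ∈ ℝ and all open intervals U, V with x ∈ U and g_f(x) ∈ V, there exists an open set W ⊆ U with x ∈ W such that g_f maps the boundary of W into V. -/
import Mathlib


open Classical in
/-- The function `g_f`. -/
noncomputable def gf (f : ℝ → ℝ) (x : ℝ) : ℝ :=
  if ∃ q : ℚ, x + (q : ℝ) ∈ Set.Icc (0:ℝ) 1 ∧ f (x + (q : ℝ)) = 0 then 1 else 0

lemma gf_rat_shift (f : ℝ → ℝ) (x : ℝ) (q : ℚ) : gf f (x + (q : ℝ)) = gf f x := by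
  unfold gf
  congr 1
  apply propext
  constructor
  · rintro ⟨q', hq'⟩
    exact ⟨q + q', by push_cast; rw [← add_assoc]; exact hq'⟩
  · rintro ⟨q', hq'⟩
    refine ⟨q' - q, ?_⟩
    push_cast
    have : x + (q : ℝ) + ((q' : ℝ) - q) = x + q' := by ring
    rw [this]
    exact hq'

theorem gf_peripherally_continuous (f : ℝ → ℝ)
    (hf : ∀ r : ℚ, (r : ℝ) ∈ Set.Icc (0:ℝ) 1 → f r ≠ 0) :
    ∀ x a b c d : ℝ, x ∈ Set.Ioo a b → gf f x ∈ Set.Ioo c d →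
      ∃ W : Set ℝ, IsOpen W ∧ W ⊆ Set.Ioo a b ∧ x ∈ W ∧
        ∀ y ∈ frontier W, gf f y ∈ Set.Ioo c d := by
  intro x a b c d hx hgf
  obtain ⟨q1, hq1⟩ := exists_rat_btwn (show a - x < 0 by linarith [hx.1])
  obtain ⟨q2, hq2⟩ := exists_rat_btwn (show (0:ℝ) < b - x by linarith [hx.2])
  refine ⟨Set.Ioo (x + q1) (x + q2), isOpen_Ioo, ?_, ?_, ?_⟩
  · intro y hy
    constructor <;> [linarith [hy.1, hq1.1]; linarith [hy.2, hq2.2]]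
  · exact ⟨by linarith [hq1.2], by linarith [hq2.1]⟩
  · intro y hy
    rw [frontier_Ioo (by linarith [hq1.2, hq2.1])] at hy
    simp only [Set.mem_insert_iff, Set.mem_singleton_iff] at hy
    rcases hy with h | h <;> rw [h, gf_rat_shift] <;> exact hgf
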